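/- The parameterized system P = (Q,T) with Q = {q₀,q₁,q₂,q₃,q₄} and T consisting of: ∀_LR{q₀,q₁,q₄}: q₀ → q₁; q₁ → q₂; ∀_L{q₀}: q₂ → q₃; q₃ → q₀; ∃_LR{q₂}: q₃ → q₄; q₄ → q₃, satisfies mutual exclusion for the state q₄: for every n and every configuration c ∈ Q* with q₀^n →*_P c, the word c contains at most one occurrence of the letter q₄. -/

import Mathlib

/-- Guards of conditional transition rules: `∀_I J` or `∃_I J` with `I ∈ {L, R, LR}`. -/
inductive Guard (Q : Type) : Type
  | forallL (J : Set Q)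
  | forallR (J : Set Q)
  | forallLR (J : Set Q)
  | existsL (J : Set Q)
  | existsR (J : Set Q)
  | existsLR (J : Set Q)

/-- A transition rule of a parameterized system: an optional guard, a source
local state and a target local state. -/
structure Rule (Q : Type) : Type where
  guard : Option (Guard Q)
  src : Q
  tgt : Q

/-- Satisfaction of a guard at a position whose strict left context is `u` and
strict right context is `v`. -/
def GuardSat {Q : Type} (g : Guard Q) (u v : List Q) : Prop :=
  match g with
  | .forallL J => ∀ q ∈ u, q ∈ J
  | .forallR J => ∀ q ∈ v, q ∈ J
  | .forallLR J => (∀ q ∈ u, q ∈ J) ∧ (∀ q ∈ v, q ∈ J)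
  | .existsL J => ∃ q ∈ u, q ∈ J
  | .existsR J => ∃ q ∈ v, q ∈ J
  | .existsLR J => (∃ q ∈ u, q ∈ J) ∨ (∃ q ∈ v, q ∈ J)

/-- One-step transition relation `→_P` of the parameterized system with rules `T`. -/
def Step {Q : Type} (T : Set (Rule Q)) (c c' : List Q) : Prop :=
  ∃ r ∈ T, ∃ u v : List Q,
    c = u ++ r.src :: v ∧ c' = u ++ r.tgt :: v ∧
      ∀ g, r.guard = some g → GuardSat g u v

/-- Reachability `→*_P`: the reflexive-transitive closure of `→_P`. -/
def Reach {Q : Type} (T : Set (Rule Q)) : List Q → List Q → Prop :=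
  Relation.ReflTransGen (Step T)

/-- Interpretation `[t_c]` of the closed term `t_c = c₁ * ⋯ * cₙ` (with `t_ε = e`)
in a structure with domain `M`, binary operation `mul`, constants `e` and `cq q`. -/
def wordVal {Q M : Type} (mul : M → M → M) (e : M) (cq : Q → M) : List Q → M
  | [] => e
  | [q] => cq q
  | q :: q' :: rest => mul (cq q) (wordVal mul e cq (q' :: rest))

/-- The set `J` of a universal guard (if any). -/
def univGuardSet {Q : Type} (g : Guard Q) : Option (Set Q) :=
  match g with
  | .forallL J => some J
  | .forallR J => some J
  | .forallLR J => some J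
  | _ => none

/-- The (universal closure of the) axiom of `Φ_P` corresponding to a single
transition rule, interpreted in a first-order structure with domain `M`. -/
def RuleAx {Q M : Type} (mul : M → M → M) (cq : Q → M)
    (R : M → Prop) (PJ : Set Q → M → Prop) (r : Rule Q) : Prop :=
  match r.guard with
  | none =>
      ∀ x y, R (mul (mul x (cq r.src)) y) → R (mul (mul x (cq r.tgt)) y)
  | some (.forallL J) =>
      ∀ x y, R (mul (mul x (cq r.src)) y) ∧ PJ J x → R (mul (mul x (cq r.tgt)) y)
  | some (.forallR J) =>
      ∀ x y, R (mul (mul x (cq r.src)) y) ∧ PJ J y → R (mul (mul x (cq r.tgt)) y)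
  | some (.forallLR J) =>
      ∀ x y, R (mul (mul x (cq r.src)) y) ∧ PJ J x ∧ PJ J y →
        R (mul (mul x (cq r.tgt)) y)
  | some (.existsL J) =>
      ∀ q ∈ J, ∀ x y z w,
        R (mul (mul x (cq r.src)) y) ∧ x = mul (mul z (cq q)) w →
          R (mul (mul x (cq r.tgt)) y)
  | some (.existsR J) =>
      ∀ q ∈ J, ∀ x y z w,
        R (mul (mul x (cq r.src)) y) ∧ y = mul (mul z (cq q)) w →
          R (mul (mul x (cq r.tgt)) y)
  | some (.existsLR J) =>
      ∀ q ∈ J, ∀ x y z w,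
        R (mul (mul x (cq r.src)) y) ∧
            (x = mul (mul z (cq q)) w ∨ y = mul (mul z (cq q)) w) →
          R (mul (mul x (cq r.tgt)) y)

/-- A first-order structure (domain `M`, operation `mul`, constants `e`, `cq q`,
predicates `In`, `R`, `P^J`) satisfies all formulas of the encoding `Φ_P` of the
parameterized system with rules `T` and initial local state `q0`. -/
def SatPhi {Q M : Type} (T : Set (Rule Q)) (q0 : Q)
    (mul : M → M → M) (e : M) (cq : Q → M)
    (In R : M → Prop) (PJ : Set Q → M → Prop) : Prop :=
  (∀ x y z : M, mul (mul x y) z = mul x (mul y z)) ∧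
  (∀ x : M, mul e x = x) ∧
  (∀ x : M, mul x e = x) ∧
  In e ∧
  (∀ x, In x → In (mul x (cq q0))) ∧
  (∀ x, In x → R x) ∧
  (∀ J : Set Q, (∃ r ∈ T, ∃ g, r.guard = some g ∧ univGuardSet g = some J) →
      PJ J e ∧ ∀ q ∈ J, ∀ x, PJ J x → PJ J (mul x (cq q))) ∧
  (∀ r ∈ T, RuleAx mul cq R PJ r)

/-- The local states of the second mutual exclusion system. -/
inductive St : Type
  | s0 | s1 | s2 | s3 | s4
deriving DecidableEq

/-- The transition rules: `∀_LR{q₀,q₁,q₄}: q₀ → q₁`; `q₁ → q₂`;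
`∀_L{q₀}: q₂ → q₃`; `q₃ → q₀`; `∃_LR{q₂}: q₃ → q₄`; `q₄ → q₃`. -/
def PT : Set (Rule St) :=
  { ⟨some (.forallLR {St.s0, St.s1, St.s4}), St.s0, St.s1⟩,
    ⟨none, St.s1, St.s2⟩,
    ⟨some (.forallL {St.s0}), St.s2, St.s3⟩,
    ⟨none, St.s3, St.s0⟩,
    ⟨some (.existsLR {St.s2}), St.s3, St.s4⟩,
    ⟨none, St.s4, St.s3⟩ }


section MEAux

/-- All letters are `s0`. -/
def allz (u : List St) : Prop := ∀ x ∈ u, x = St.s0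

/-- The inductive invariant. -/
def MEInv (c : List St) : Prop :=
  (c.count St.s3 + c.count St.s4 ≤ 1) ∧
  (St.s4 ∈ c → St.s2 ∈ c) ∧
  (∀ u q v, c = u ++ q :: v → (q = St.s1 ∨ q = St.s2) → allz u →
     St.s3 ∉ v ∧ St.s4 ∉ v)

lemma decomp {α : Type} : ∀ (u : List α) (v u' v' : List α) (a b : α),
    u ++ a :: v = u' ++ b :: v' →
    (u = u' ∧ a = b ∧ v = v') ∨
    (∃ w, u = u' ++ b :: w ∧ v' = w ++ a :: v) ∨
    (∃ w, u' = u ++ a :: w ∧ v = w ++ b :: v')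
  | [], v, u', v', a, b, h => by
    cases u' with
    | nil => simp_all
    | cons x u'' =>
      simp only [List.nil_append, List.cons_append, List.cons.injEq] at h
      exact Or.inr (Or.inr ⟨u'', by simp [h.1, h.2], h.2⟩)
  | x :: u₂, v, u', v', a, b, h => by
    cases u' with
    | nil =>
      simp only [List.cons_append, List.nil_append, List.cons.injEq] at h
      exact Or.inr (Or.inl ⟨u₂, by simp [h.1], h.2.symm⟩)
    | cons y u'' =>
      simp only [List.cons_append, List.cons.injEq] at h
      obtain ⟨rfl, h2⟩ := h
      rcases decomp u₂ v u'' v' a b h2 with ⟨rfl, rfl, rfl⟩ | ⟨w, hw1, hw2⟩ | ⟨w, hw1, hw2⟩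
      · exact Or.inl ⟨rfl, rfl, rfl⟩
      · exact Or.inr (Or.inl ⟨w, by simp [hw1], hw2⟩)
      · exact Or.inr (Or.inr ⟨w, by simp [hw1], hw2⟩)

lemma inv_init (n : ℕ) : MEInv (List.replicate n St.s0) := by
  refine ⟨by simp [List.count_replicate], by intro h; exact absurd (List.eq_of_mem_replicate h) (by simp), ?_⟩
  intro u q v heq hq hz
  have hmem : q ∈ List.replicate n St.s0 := by
    rw [heq]; exact List.mem_append_right _ (List.mem_cons_self)
  have := List.eq_of_mem_replicate hmem
  rcases hq with rfl | rfl <;> simp_all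

lemma inv_step {c c' : List St} (hinv : MEInv c) (hstep : Step PT c c') : MEInv c' := by
  obtain ⟨hA, hB, hC⟩ := hinv
  obtain ⟨r, hr, u, v, rfl, rfl, hg⟩ := hstep
  simp only [PT, Set.mem_insert_iff, Set.mem_singleton_iff] at hr
  rcases hr with rfl | rfl | rfl | rfl | rfl | rfl
  · -- rule 1 : ∀_LR {s0,s1,s4} : s0 → s1
    have hg1 := hg _ rfl
    simp only [GuardSat, Set.mem_insert_iff, Set.mem_singleton_iff] at hg1
    obtain ⟨hgu, hgv⟩ := hg1
    refine ⟨?_, ?_, ?_⟩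
    · simp [List.count_append, List.count_cons] at hA ⊢
      omega
    · intro h4
      simp only [List.mem_append, List.mem_cons] at h4 hB ⊢
      have h2 := hB (by tauto)
      rcases h2 with h2 | h2 | h2
      · exact Or.inl h2
      · exact absurd h2 (by simp)
      · exact Or.inr (Or.inr h2)
    · intro u' q' v' heq hq hz
      rcases decomp _ _ _ _ _ _ heq with ⟨rfl, rfl, rfl⟩ | ⟨w, rfl, rfl⟩ | ⟨w, hw1, rfl⟩
      · constructor
        · intro h3; rcases hgv _ h3 with h | h | h <;> simp_all
        · intro h4
          have h2 := hB (by simp [h4])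
          simp only [List.mem_append, List.mem_cons] at h2
          rcases h2 with h2 | h2 | h2
          · rcases hgu _ h2 with h | h | h <;> simp_all
          · simp at h2
          · rcases hgv _ h2 with h | h | h <;> simp_all
      · have := hC u' q' (w ++ St.s0 :: v) (by simp) hq
          (fun x hx => hz x (by simp [hx]))
        simp only [List.mem_append, List.mem_cons] at this ⊢
        constructor
        · intro h; rcases h with h | h | h <;> simp_all
        · intro h; rcases h with h | h | h <;> simp_all
      · exfalso
        have : St.s1 ∈ u' := by rw [hw1]; simp
        exact absurd (hz _ this) (by simp)
  · -- rule 2 : s1 → s2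
    refine ⟨?_, ?_, ?_⟩
    · simp [List.count_append, List.count_cons] at hA ⊢
      omega
    · intro _; simp
    · intro u' q' v' heq hq hz
      rcases decomp _ _ _ _ _ _ heq with ⟨rfl, rfl, rfl⟩ | ⟨w, rfl, rfl⟩ | ⟨w, hw1, rfl⟩
      · exact hC _ _ _ rfl (Or.inl rfl) hz
      · have := hC u' q' (w ++ St.s1 :: v) (by simp) hq
          (fun x hx => hz x (by simp [hx]))
        simp only [List.mem_append, List.mem_cons] at this ⊢
        constructor
        · intro h; rcases h with h | h | h <;> simp_all
        · intro h; rcases h with h | h | h <;> simp_all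
      · exfalso
        have : St.s2 ∈ u' := by rw [hw1]; simp
        exact absurd (hz _ this) (by simp)
  · -- rule 3 : ∀_L {s0} : s2 → s3
    have hg3 := hg _ rfl
    simp only [GuardSat, Set.mem_singleton_iff] at hg3
    have hcv := hC u St.s2 v rfl (Or.inr rfl) hg3
    refine ⟨?_, ?_, ?_⟩
    · have hu3 : u.count St.s3 = 0 := by
        rw [List.count_eq_zero]; intro h; exact absurd (hg3 _ h) (by simp)
      have hu4 : u.count St.s4 = 0 := by
        rw [List.count_eq_zero]; intro h; exact absurd (hg3 _ h) (by simp)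
      have hv3 : v.count St.s3 = 0 := List.count_eq_zero.mpr hcv.1
      have hv4 : v.count St.s4 = 0 := List.count_eq_zero.mpr hcv.2
      simp [List.count_append, List.count_cons] at hA ⊢
      omega
    · intro h4
      exfalso
      simp only [List.mem_append, List.mem_cons] at h4
      rcases h4 with h | h | h
      · exact absurd (hg3 _ h) (by simp)
      · simp at h
      · exact hcv.2 h
    · intro u' q' v' heq hq hz
      rcases decomp _ _ _ _ _ _ heq with ⟨rfl, rfl, rfl⟩ | ⟨w, rfl, rfl⟩ | ⟨w, hw1, rfl⟩
      · rcases hq with h | h <;> simp at h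
      · exfalso
        have : q' ∈ u' ++ q' :: w := by simp
        have := hg3 _ this
        rcases hq with rfl | rfl <;> simp_all
      · exfalso
        have : St.s3 ∈ u' := by rw [hw1]; simp
        exact absurd (hz _ this) (by simp)
  · -- rule 4 : s3 → s0
    refine ⟨?_, ?_, ?_⟩
    · simp [List.count_append, List.count_cons] at hA ⊢
      omega
    · intro h4
      simp only [List.mem_append, List.mem_cons] at h4 hB ⊢
      have h2 := hB (by tauto)
      rcases h2 with h2 | h2 | h2
      · exact Or.inl h2
      · exact absurd h2 (by simp)
      · exact Or.inr (Or.inr h2)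
    · intro u' q' v' heq hq hz
      rcases decomp _ _ _ _ _ _ heq with ⟨rfl, rfl, rfl⟩ | ⟨w, rfl, rfl⟩ | ⟨w, rfl, rfl⟩
      · rcases hq with h | h <;> simp at h
      · exfalso
        have := hC u' q' (w ++ St.s3 :: v) (by simp) hq
          (fun x hx => hz x (by simp [hx]))
        exact this.1 (by simp)
      · -- use the count bound: the s3 here is the unique critical letter
        simp [List.count_append, List.count_cons] at hA
        constructor
        · exact List.count_eq_zero.mp (by omega)
        · exact List.count_eq_zero.mp (by omega)
  · -- rule 5 : ∃_LR {s2} : s3 → s4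
    have hg5 := hg _ rfl
    simp only [GuardSat, Set.mem_singleton_iff] at hg5
    have h2mem : St.s2 ∈ u ∨ St.s2 ∈ v := by
      rcases hg5 with ⟨q, hq, rfl⟩ | ⟨q, hq, rfl⟩
      · exact Or.inl hq
      · exact Or.inr hq
    refine ⟨?_, ?_, ?_⟩
    · simp [List.count_append, List.count_cons] at hA ⊢
      omega
    · intro _
      simp only [List.mem_append, List.mem_cons]
      tauto
    · intro u' q' v' heq hq hz
      rcases decomp _ _ _ _ _ _ heq with ⟨rfl, rfl, rfl⟩ | ⟨w, rfl, rfl⟩ | ⟨w, hw1, rfl⟩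
      · rcases hq with h | h <;> simp at h
      · exfalso
        have := hC u' q' (w ++ St.s3 :: v) (by simp) hq
          (fun x hx => hz x (by simp [hx]))
        exact this.1 (by simp)
      · exfalso
        have : St.s4 ∈ u' := by rw [hw1]; simp
        exact absurd (hz _ this) (by simp)
  · -- rule 6 : s4 → s3
    refine ⟨?_, ?_, ?_⟩
    · simp [List.count_append, List.count_cons] at hA ⊢
      omega
    · intro h4
      simp only [List.mem_append, List.mem_cons] at h4 hB ⊢
      have h2 := hB (by tauto)
      rcases h2 with h2 | h2 | h2
      · exact Or.inl h2
      · exact absurd h2 (by simp)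
      · exact Or.inr (Or.inr h2)
    · intro u' q' v' heq hq hz
      rcases decomp _ _ _ _ _ _ heq with ⟨rfl, rfl, rfl⟩ | ⟨w, rfl, rfl⟩ | ⟨w, hw1, rfl⟩
      · rcases hq with h | h <;> simp at h
      · exfalso
        have := hC u' q' (w ++ St.s4 :: v) (by simp) hq
          (fun x hx => hz x (by simp [hx]))
        exact this.2 (by simp)
      · exfalso
        have : St.s3 ∈ u' := by rw [hw1]; simp
        exact absurd (hz _ this) (by simp)

lemma inv_reach {c c' : List St} (h : Reach PT c c') (hinv : MEInv c) : MEInv c' := by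
  induction h with
  | refl => exact hinv
  | tail _ hstep ih => exact inv_step ih hstep

end MEAux

/-- mutual exclusion for state `q₄`: every configuration
reachable from an initial configuration `q₀^n` contains at most one occurrence
of the letter `q₄`, i.e. it is not of the form `u ++ q₄ :: v ++ q₄ :: w`. -/
theorem mutual_exclusion_q4 (n : ℕ) (c : List St)
    (hreach : Reach PT (List.replicate n St.s0) c) :
    ¬ ∃ u v w : List St, c = u ++ St.s4 :: (v ++ St.s4 :: w) := by
  rintro ⟨u, v, w, rfl⟩
  have hinv := inv_reach hreach (inv_init n)
  have := hinv.1
  simp [List.count_append, List.count_cons] at this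
  omega
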